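/- Let X be a (c,2,4)-hypercontractive real-valued random variable with μ₂(X) = σ² > 0. Then for t = σ/2 and δ = 9/(128·(c+2)⁴), one has Q_X(t) ≤ 1 − δ. -/

import Mathlib

open MeasureTheory ProbabilityTheory

/-- The Lévy concentration function `Q_X(t) = sup_a Pr[a ≤ X ≤ a + t]`. -/
noncomputable def levyConc {Ω : Type*} [MeasurableSpace Ω] (μ : Measure Ω)
    (X : Ω → ℝ) (t : ℝ) : ℝ :=
  ⨆ a : ℝ, (μ {ω | a ≤ X ω ∧ X ω ≤ a + t}).toReal

/-- The `j`-th absolute central moment `μ_j(X) = E[|X - E[X]|^j]`. -/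
noncomputable def absCentralMoment {Ω : Type*} [MeasurableSpace Ω] (μ : Measure Ω)
    (X : Ω → ℝ) (j : ℕ) : ℝ :=
  ∫ ω, |X ω - ∫ ω', X ω' ∂μ| ^ j ∂μ

/-- `X` is `(c,2,4)`-hypercontractive if `μ₄(X) ≤ c⁴ ⬝ μ₂(X)²`. -/
def Hypercontractive {Ω : Type*} [MeasurableSpace Ω] (μ : Measure Ω)
    (X : Ω → ℝ) (c : ℝ) : Prop :=
  absCentralMoment μ X 4 ≤ c ^ 4 * (absCentralMoment μ X 2) ^ 2

lemma aux_int {Ω : Type*} [MeasurableSpace Ω] (μ : Measure Ω) [IsProbabilityMeasure μ]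
    (f : Ω → ℝ) (hf : MemLp f 4 μ) :
    Integrable (fun ω => f ω ^ 4) μ ∧ Integrable (fun ω => f ω ^ 2) μ := by
  constructor
  · have h := hf.integrable_norm_rpow (by norm_num) (by norm_num)
    have he : (fun ω => f ω ^ 4) = fun x => ‖f x‖ ^ ((4:ENNReal).toReal) := by
      funext ω
      rw [Real.norm_eq_abs, show ((4:ENNReal).toReal) = ((4:ℕ):ℝ) by norm_num,
        Real.rpow_natCast, (Even.pow_abs (by decide) _)]
    rw [he]; exact h
  · have h2 : MemLp f 2 μ := hf.mono_exponent (by norm_num)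
    have h := h2.integrable_norm_rpow (by norm_num) (by norm_num)
    have he : (fun ω => f ω ^ 2) = fun x => ‖f x‖ ^ ((2:ENNReal).toReal) := by
      funext ω
      rw [Real.norm_eq_abs, show ((2:ENNReal).toReal) = ((2:ℕ):ℝ) by norm_num,
        Real.rpow_natCast, sq_abs]
    rw [he]; exact h

lemma acm_two {Ω : Type*} [MeasurableSpace Ω] (μ : Measure Ω) (X : Ω → ℝ) :
    absCentralMoment μ X 2 = ∫ ω, (X ω - ∫ ω', X ω' ∂μ) ^ 2 ∂μ := by
  simp only [absCentralMoment, sq_abs]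

lemma acm_four {Ω : Type*} [MeasurableSpace Ω] (μ : Measure Ω) (X : Ω → ℝ) :
    absCentralMoment μ X 4 = ∫ ω, (X ω - ∫ ω', X ω' ∂μ) ^ 4 ∂μ := by
  simp only [absCentralMoment, Even.pow_abs (by decide : Even 4)]

set_option maxHeartbeats 1000000 in
theorem levyConc_le_of_hypercontractive
    {Ω : Type*} [MeasurableSpace Ω] (μ : Measure Ω) [IsProbabilityMeasure μ]
    (X : Ω → ℝ) (hX : Measurable X) (hX4 : MemLp X 4 μ)
    (c : ℝ) (hc : 0 < c) (hhyp : Hypercontractive μ X c)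
    (σ : ℝ) (hσ : 0 < σ) (hvar : absCentralMoment μ X 2 = σ ^ 2) :
    levyConc μ X (σ / 2) ≤ 1 - 9 / (128 * (c + 2) ^ 4) := by
  have hc4 : (0:ℝ) < (c + 2) ^ 4 := by positivity
  have hδle : 9 / (128 * (c + 2) ^ 4) ≤ 9 / 2048 := by
    rw [div_le_div_iff₀ (by positivity) (by norm_num)]
    nlinarith [pow_pos hc 4, pow_pos hc 3, pow_pos hc 2, hc.le]
  set e := ∫ ω', X ω' ∂μ with he
  have hXint : Integrable X μ := hX4.integrable (by norm_num)
  have hfe : MemLp (fun ω => X ω - e) 4 μ := hX4.sub (memLp_const e)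
  obtain ⟨hI4e, hI2e⟩ := aux_int μ _ hfe
  have hIe : Integrable (fun ω => X ω - e) μ := hXint.sub (integrable_const e)
  have hmean0 : ∫ ω, (X ω - e) ∂μ = 0 := by
    rw [integral_sub hXint (integrable_const e), integral_const]
    simp [he]
  have hμ2 : ∫ ω, (X ω - e) ^ 2 ∂μ = σ ^ 2 := by
    rw [he, ← acm_two, hvar]
  have hμ4 : ∫ ω, (X ω - e) ^ 4 ∂μ ≤ c ^ 4 * σ ^ 4 := by
    have h := hhyp
    unfold Hypercontractive at h
    rw [hvar, acm_four] at h
    calc ∫ ω, (X ω - e) ^ 4 ∂μ = ∫ ω, (X ω - ∫ ω', X ω' ∂μ) ^ 4 ∂μ := by rw [← he]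
      _ ≤ c ^ 4 * (σ ^ 2) ^ 2 := h
      _ = c ^ 4 * σ ^ 4 := by ring
  apply ciSup_le
  intro a
  set m : ℝ := a + σ / 4 with hm
  clear_value m
  have hTmeas : MeasurableSet {ω | a ≤ X ω ∧ X ω ≤ a + σ / 2} :=
    (measurableSet_le measurable_const hX).inter (measurableSet_le hX measurable_const)
  rcases le_or_gt (2 * σ) |m - e| with hfar | hnear
  · -- far case: Chebyshev
    have hsub : {ω | a ≤ X ω ∧ X ω ≤ a + σ / 2} ⊆ {ω | (7 * σ / 4) ^ 2 ≤ (X ω - e) ^ 2} := by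
      rintro ω ⟨h1, h2⟩
      simp only [Set.mem_setOf_eq]
      rcases abs_cases (m - e) with ⟨hh, _⟩ | ⟨hh, _⟩ <;> rw [hh] at hfar
      · have hu : 7 * σ / 4 ≤ X ω - e := by linarith [hm]
        exact pow_le_pow_left₀ (by positivity) hu 2
      · have hu : 7 * σ / 4 ≤ -(X ω - e) := by linarith [hm]
        calc (7 * σ / 4) ^ 2 ≤ (-(X ω - e)) ^ 2 := pow_le_pow_left₀ (by positivity) hu 2
          _ = (X ω - e) ^ 2 := neg_sq _
    have hM := mul_meas_ge_le_integral_of_nonneg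
      (μ := μ) (f := fun ω => (X ω - e) ^ 2) (ae_of_all _ fun ω => sq_nonneg _) hI2e
      ((7 * σ / 4) ^ 2)
    rw [hμ2, measureReal_def] at hM
    have hmono : (μ {ω | a ≤ X ω ∧ X ω ≤ a + σ / 2}).toReal
        ≤ (μ {x | (7 * σ / 4) ^ 2 ≤ (X x - e) ^ 2}).toReal :=
      ENNReal.toReal_mono (measure_ne_top μ _) (measure_mono hsub)
    have hbig : (μ {x | (7 * σ / 4) ^ 2 ≤ (X x - e) ^ 2}).toReal ≤ 16 / 49 := by
      nlinarith [mul_pos hσ hσ, hM]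
    linarith
  · -- near case: Paley–Zygmund
    have hfm : MemLp (fun ω => X ω - m) 4 μ := hX4.sub (memLp_const m)
    obtain ⟨hI4m, hI2m⟩ := aux_int μ _ hfm
    set A := ∫ ω, (X ω - m) ^ 2 ∂μ with hAdef
    set B := ∫ ω, (X ω - m) ^ 4 ∂μ with hBdef
    have hA : A = σ ^ 2 + (e - m) ^ 2 := by
      have hexp : (fun ω => (X ω - m) ^ 2)
          = fun ω => (X ω - e) ^ 2 + (2 * (e - m)) * (X ω - e) + (e - m) ^ 2 := by
        funext ω; ring
      rw [hAdef, hexp, integral_add (by exact (hI2e.add (hIe.const_mul _)))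
        (integrable_const _), integral_add hI2e (hIe.const_mul _),
        integral_const_mul, hmean0, hμ2, integral_const]
      simp
    have hAσ : σ ^ 2 ≤ A := by nlinarith [sq_nonneg (e - m)]
    have hem : (e - m) ^ 2 < 4 * σ ^ 2 := by
      rcases abs_cases (m - e) with ⟨hh, _⟩ | ⟨hh, _⟩ <;> rw [hh] at hnear <;> nlinarith
    have hBb : (0:ℝ) < 8 * (c ^ 4 + 16) * σ ^ 4 := by positivity
    have hB : B ≤ 8 * (c ^ 4 + 16) * σ ^ 4 := by
      have hpt : ∀ ω, (X ω - m) ^ 4 ≤ 8 * (X ω - e) ^ 4 + 8 * (e - m) ^ 4 := by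
        intro ω
        nlinarith [sq_nonneg ((X ω - e) - (e - m)), sq_nonneg ((X ω - e) + (e - m)),
          sq_nonneg ((X ω - e) ^ 2 - (e - m) ^ 2), sq_nonneg ((X ω - e) ^ 2 + (e - m) ^ 2)]
      calc B ≤ ∫ ω, (8 * (X ω - e) ^ 4 + 8 * (e - m) ^ 4) ∂μ := by
              exact integral_mono hI4m ((hI4e.const_mul 8).add (integrable_const _)) hpt
        _ = 8 * ∫ ω, (X ω - e) ^ 4 ∂μ + 8 * (e - m) ^ 4 := by
              rw [integral_add (hI4e.const_mul 8) (integrable_const _), integral_const_mul,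
                integral_const]; simp
        _ ≤ 8 * (c ^ 4 * σ ^ 4) + 8 * (e - m) ^ 4 := by linarith [hμ4]
        _ ≤ 8 * (c ^ 4 + 16) * σ ^ 4 := by nlinarith [sq_nonneg (e - m), hem]
    set S := {ω | σ ^ 2 / 16 < (X ω - m) ^ 2} with hSdef
    have hSmeas : MeasurableSet S :=
      measurableSet_lt measurable_const ((hX.sub measurable_const).pow_const 2)
    set p := (μ S).toReal with hpdef
    have hATpos : (0:ℝ) < A - σ ^ 2 / 16 := by nlinarith
    set lam := 2 * (8 * (c ^ 4 + 16) * σ ^ 4) / (A - σ ^ 2 / 16) with hlam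
    have hlampos : 0 < lam := div_pos (by positivity) hATpos
    have hpt : ∀ ω, (X ω - m) ^ 2
        ≤ σ ^ 2 / 16 + (X ω - m) ^ 4 / lam + S.indicator (fun _ => lam / 4) ω := by
      intro ω
      by_cases hω : ω ∈ S
      · rw [Set.indicator_of_mem hω]
        have key : (X ω - m) ^ 2 - σ ^ 2 / 16 - lam / 4 ≤ (X ω - m) ^ 4 / lam := by
          rw [le_div_iff₀ hlampos]
          nlinarith [sq_nonneg ((X ω - m) ^ 2 - lam / 2),
            mul_nonneg (by positivity : (0:ℝ) ≤ σ ^ 2 / 16) hlampos.le]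
        linarith
      · rw [Set.indicator_of_notMem hω]
        simp only [hSdef, Set.mem_setOf_eq, not_lt] at hω
        have : (0:ℝ) ≤ (X ω - m) ^ 4 / lam := by positivity
        linarith
    have hint : A ≤ σ ^ 2 / 16 + B / lam + (lam / 4) * p := by
      have ig2 : Integrable (fun ω => (X ω - m) ^ 4 / lam) μ := hI4m.div_const lam
      have ig1 : Integrable (fun ω => σ ^ 2 / 16 + (X ω - m) ^ 4 / lam) μ := by
        exact (integrable_const _).add ig2
      have ig0 : Integrable (fun ω => S.indicator (fun _ => lam / 4) ω) μ := by
        exact (integrable_const _).indicator hSmeas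
      have h1 : A ≤ ∫ ω, (σ ^ 2 / 16 + (X ω - m) ^ 4 / lam
          + S.indicator (fun _ => lam / 4) ω) ∂μ :=
        integral_mono hI2m (ig1.add ig0) hpt
      rw [integral_add ig1 ig0, integral_add (integrable_const _) ig2,
        integral_const, integral_indicator_const _ hSmeas, integral_div] at h1
      simp only [measureReal_def, measure_univ, ENNReal.toReal_one, one_smul, smul_eq_mul] at h1
      rw [hpdef]
      linarith
    have hBl : B / lam ≤ (A - σ ^ 2 / 16) / 2 := by
      rw [hlam, div_div_eq_mul_div]
      rw [div_le_div_iff₀ (by positivity) (by norm_num)]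
      nlinarith [mul_le_mul_of_nonneg_right hB hATpos.le]
    have h2 : (A - σ ^ 2 / 16) / 2 ≤ (lam / 4) * p := by linarith
    have hp1 : 2 * (A - σ ^ 2 / 16) / lam ≤ p := by
      rw [div_le_iff₀ hlampos]; linarith
    have h3 : 2 * (A - σ ^ 2 / 16) / lam = (A - σ ^ 2 / 16) ^ 2 / (8 * (c ^ 4 + 16) * σ ^ 4) := by
      rw [hlam]; field_simp
    have h4 : (15 * σ ^ 2 / 16) ^ 2 / (8 * (c ^ 4 + 16) * σ ^ 4)
        ≤ (A - σ ^ 2 / 16) ^ 2 / (8 * (c ^ 4 + 16) * σ ^ 4) := by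
      gcongr <;> nlinarith
    have h5 : (15 * σ ^ 2 / 16) ^ 2 / (8 * (c ^ 4 + 16) * σ ^ 4)
        = 225 / (2048 * (c ^ 4 + 16)) := by
      field_simp; ring
    have hδ' : 9 / (128 * (c + 2) ^ 4) ≤ 225 / (2048 * (c ^ 4 + 16)) := by
      rw [div_le_div_iff₀ (by positivity) (by positivity)]
      nlinarith [pow_pos hc 4, pow_pos hc 3, pow_pos hc 2, hc.le]
    have hpδ : 9 / (128 * (c + 2) ^ 4) ≤ p := by
      rw [h3] at hp1
      rw [h5] at h4
      linarith
    -- T ⊆ Sᶜ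
    have hTS : {ω | a ≤ X ω ∧ X ω ≤ a + σ / 2} ⊆ Sᶜ := by
      rintro ω ⟨h1, h2⟩
      simp only [hSdef, Set.mem_compl_iff, Set.mem_setOf_eq, not_lt]
      nlinarith [mul_nonneg (show (0:ℝ) ≤ σ / 4 - (X ω - m) by linarith [hm])
        (show (0:ℝ) ≤ X ω - m + σ / 4 by linarith [hm])]
    have hcompl : (μ Sᶜ).toReal = 1 - p := by
      rw [prob_compl_eq_one_sub hSmeas, ENNReal.toReal_sub_of_le prob_le_one ENNReal.one_ne_top]
      simp [hpdef]
    calc (μ {ω | a ≤ X ω ∧ X ω ≤ a + σ / 2}).toReal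
        ≤ (μ Sᶜ).toReal := ENNReal.toReal_mono (measure_ne_top μ _) (measure_mono hTS)
      _ = 1 - p := hcompl
      _ ≤ 1 - 9 / (128 * (c + 2) ^ 4) := by linarith
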